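/- arXiv:2302.13182 — 2 statements merged into one kernel-verified Lean document; each statement's English description precedes it below -/
import Mathlib

section
/- Let K be a commutative ring and let ℓ ≥ 1. For a formal power series f ∈ K[[X]] that is ℓ-tangent to the identity, define the additive residue Resad̄_ℓ(f) := (ℓ+1)·a_{ℓ+1}² − 2·a_{2ℓ+1}, where a_n denotes the coefficient of X^n in f. Then for any two power series f, g ∈ K[[X]] that are ℓ-tangent to the identity, Resad̄_ℓ(f∘g) = Resad̄_ℓ(f) + Resad̄_ℓ(g); that is, Resad̄_ℓ is additive under formal composition (a group homomorphism from the group of formal series ℓ-tangent to the identity to the additive group of K). -/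
/-- Formal composition (substitution) `f ∘ g` of power series, meaningful when `g`
has zero constant coefficient: the coefficient of `X^n` in `f ∘ g` is
`∑_{k ≤ n} a_k · (coefficient of X^n in g^k)`. -/
noncomputable def psComp {K : Type*} [CommRing K] (f g : PowerSeries K) : PowerSeries K :=
  PowerSeries.mk fun n => ∑ k ∈ Finset.range (n + 1),
    PowerSeries.coeff k f * PowerSeries.coeff n (g ^ k)

/-- A formal power series is `ℓ`-tangent to the identity if its constant coefficient is `0`,
its linear coefficient is `1`, and its coefficient of `X^n` vanishes for `2 ≤ n ≤ ℓ`. -/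
def IsTangentToId {K : Type*} [CommRing K] (ℓ : ℕ) (f : PowerSeries K) : Prop :=
  PowerSeries.coeff 0 f = 0 ∧ PowerSeries.coeff 1 f = 1 ∧
    ∀ n, 2 ≤ n → n ≤ ℓ → PowerSeries.coeff n f = 0
/-- The additive residue at order `ℓ+1`:
`Resad̄_ℓ(f) = (ℓ+1)·a_{ℓ+1}² − 2·a_{2ℓ+1}`. -/
noncomputable def resadBar {K : Type*} [CommRing K] (ℓ : ℕ) (f : PowerSeries K) : K :=
  (ℓ + 1 : K) * (PowerSeries.coeff (ℓ + 1) f) ^ 2 - 2 * PowerSeries.coeff (2 * ℓ + 1) f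

lemma pow_add_expand {R : Type*} [CommRing R] (x h : R) (k : ℕ) :
    ∃ r, (x + h) ^ k = x ^ k + (k : R) * x ^ (k - 1) * h + h ^ 2 * r := by
  induction k with
  | zero => exact ⟨0, by simp⟩
  | succ k ih =>
    obtain ⟨r, hr⟩ := ih
    refine ⟨(k : R) * x ^ (k - 1) + r * (x + h), ?_⟩
    have hx : (k : R) * x ^ (k - 1) * x = (k : R) * x ^ k := by
      cases k with
      | zero => simp
      | succ k => simp only [Nat.add_sub_cancel]; ring
    rw [pow_succ, hr]
    simp only [Nat.add_sub_cancel]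
    push_cast
    linear_combination h * hx

lemma coeff_g_pow {K : Type*} [CommRing K] (ℓ : ℕ) (g : PowerSeries K)
    (hX : ∀ m ≤ ℓ, PowerSeries.coeff m (g - PowerSeries.X) = 0) (k n : ℕ)
    (hn : n ≤ 2 * ℓ + 1) :
    PowerSeries.coeff n (g ^ k) =
      (if n = k then 1 else 0) +
        (k : K) * (if k - 1 ≤ n then PowerSeries.coeff (n - (k - 1)) (g - PowerSeries.X)
          else 0) := by
  set h := g - PowerSeries.X with hh
  obtain ⟨r, hr⟩ := pow_add_expand (PowerSeries.X : PowerSeries K) h k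
  have hg : g = PowerSeries.X + h := by rw [hh]; ring
  have hdvd : (PowerSeries.X : PowerSeries K) ^ (ℓ + 1) ∣ h :=
    PowerSeries.X_pow_dvd_iff.mpr fun m hm => hX m (by omega)
  have hzero : PowerSeries.coeff n (h ^ 2 * r) = 0 := by
    obtain ⟨s, hs⟩ := hdvd
    have : h ^ 2 * r = PowerSeries.X ^ (2 * ℓ + 2) * (s ^ 2 * r) := by
      rw [hs, mul_pow, ← pow_mul, show (ℓ + 1) * 2 = 2 * ℓ + 2 by ring]; ring
    rw [this, PowerSeries.coeff_X_pow_mul']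
    simp [Nat.not_le.mpr (by omega : n < 2 * ℓ + 2)]
  have hcast : ((k : ℕ) : PowerSeries K) = PowerSeries.C (k : K) := by
    simp [map_natCast]
  rw [hg, hr, map_add, map_add, hzero, add_zero, PowerSeries.coeff_X_pow,
    hcast, mul_assoc, PowerSeries.coeff_C_mul, PowerSeries.coeff_X_pow_mul']


theorem stmt_1 {K : Type*} [CommRing K] (ℓ : ℕ) (hℓ : 1 ≤ ℓ)
    (f g : PowerSeries K) (hf : IsTangentToId ℓ f) (hg : IsTangentToId ℓ g) :
    resadBar ℓ (psComp f g) = resadBar ℓ f + resadBar ℓ g := by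
  obtain ⟨hf0, hf1, hfn⟩ := hf
  obtain ⟨hg0, hg1, hgn⟩ := hg
  have hX : ∀ m ≤ ℓ, PowerSeries.coeff m (g - PowerSeries.X) = 0 := by
    intro m hm
    rw [map_sub, PowerSeries.coeff_X]
    rcases m with _ | _ | m
    · simpa using hg0
    · simp [hg1]
    · rw [hgn (m + 2) (by omega) hm]
      simp
  have hl1 : PowerSeries.coeff (ℓ + 1) (g - PowerSeries.X) = PowerSeries.coeff (ℓ + 1) g := by
    rw [map_sub, PowerSeries.coeff_X, if_neg (by omega)]
    ring
  have key1 : PowerSeries.coeff (ℓ + 1) (psComp f g) =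
      PowerSeries.coeff (ℓ + 1) g + PowerSeries.coeff (ℓ + 1) f := by
    rw [psComp, PowerSeries.coeff_mk]
    have hsub : ({1, ℓ + 1} : Finset ℕ) ⊆ Finset.range (ℓ + 1 + 1) := by
      intro x hx; simp at hx ⊢; omega
    rw [← Finset.sum_subset hsub (by
      intro k hk hk2
      simp only [Finset.mem_range, Finset.mem_insert, Finset.mem_singleton] at hk hk2
      have : k = 0 ∨ (2 ≤ k ∧ k ≤ ℓ) := by omega
      rcases this with h0 | ⟨h2, h3⟩
      · rw [h0, hf0, zero_mul]
      · rw [hfn k h2 h3, zero_mul])]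
    rw [Finset.sum_pair (by omega : 1 ≠ ℓ + 1), hf1, pow_one, one_mul,
      coeff_g_pow ℓ g hX (ℓ + 1) (ℓ + 1) (by omega), if_pos rfl]
    rw [show ℓ + 1 - (ℓ + 1 - 1) = 1 by omega, if_pos (by omega), hX 1 hℓ]
    ring
  have key2 : PowerSeries.coeff (2 * ℓ + 1) (psComp f g) =
      PowerSeries.coeff (2 * ℓ + 1) g +
        ((ℓ : K) + 1) * PowerSeries.coeff (ℓ + 1) f * PowerSeries.coeff (ℓ + 1) g +
        PowerSeries.coeff (2 * ℓ + 1) f := by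
    rw [psComp, PowerSeries.coeff_mk]
    have hsub : ({1, ℓ + 1, 2 * ℓ + 1} : Finset ℕ) ⊆ Finset.range (2 * ℓ + 1 + 1) := by
      intro x hx; simp at hx ⊢; omega
    rw [← Finset.sum_subset hsub (by
      intro k hk hk2
      simp only [Finset.mem_range, Finset.mem_insert, Finset.mem_singleton] at hk hk2
      have : k = 0 ∨ (2 ≤ k ∧ k ≤ ℓ) ∨ (ℓ + 2 ≤ k ∧ k ≤ 2 * ℓ) := by omega
      rcases this with h0 | ⟨h2, h3⟩ | ⟨h4, h5⟩
      · rw [h0, hf0, zero_mul]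
      · rw [hfn k h2 h3, zero_mul]
      · rw [coeff_g_pow ℓ g hX k (2 * ℓ + 1) (by omega), if_neg (by omega),
          if_pos (by omega), hX (2 * ℓ + 1 - (k - 1)) (by omega)]
        ring)]
    rw [Finset.sum_insert (by simp; omega), Finset.sum_pair (by omega : ℓ + 1 ≠ 2 * ℓ + 1),
      hf1, pow_one, one_mul,
      coeff_g_pow ℓ g hX (ℓ + 1) (2 * ℓ + 1) (by omega), if_neg (by omega),
      if_pos (by omega), show 2 * ℓ + 1 - (ℓ + 1 - 1) = ℓ + 1 by omega, hl1,
      coeff_g_pow ℓ g hX (2 * ℓ + 1) (2 * ℓ + 1) (by omega), if_pos rfl,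
      if_pos (by omega), show 2 * ℓ + 1 - (2 * ℓ + 1 - 1) = 1 by omega, hX 1 hℓ]
    push_cast
    ring
  rw [resadBar, resadBar, resadBar, key1, key2]
  ring
end

section
/- Let K be a field of characteristic zero, let ℓ ≥ 1, and let μ, ν ∈ K. Set N_μ := X + X^{ℓ+1} + μ·X^{2ℓ+1} and N_ν := X + X^{ℓ+1} + ν·X^{2ℓ+1} in K[[X]]. If there exists a formal power series h ∈ K[[X]] with constant coefficient 0 and nonzero linear coefficient such that h∘N_μ = N_ν∘h, then μ = ν. (The residue μ in the formal normal form X + X^{ℓ+1} + μX^{2ℓ+1} is uniquely determined by the formal conjugacy class.) -/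
open PowerSeries Finset

section Aux
variable {K : Type*} [CommRing K]

lemma coeff_N (ℓ : ℕ) (hℓ : 1 ≤ ℓ) (μ : K) (n : ℕ) :
    coeff n (X + X ^ (ℓ + 1) + C μ * X ^ (2 * ℓ + 1)) =
      if n = 1 then 1 else if n = ℓ + 1 then 1 else if n = 2 * ℓ + 1 then μ else 0 := by
  simp only [map_add, coeff_X, coeff_X_pow, coeff_C_mul]
  split_ifs <;> first | ring1 | (exfalso; omega)

lemma sum_shift (n d : ℕ) (w : ℕ → K) :
    ∑ k ∈ range (n + 1), (if n = k + d then w k else 0) = if d ≤ n then w (n - d) else 0 := by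
  by_cases hd : d ≤ n
  · rw [if_pos hd, Finset.sum_eq_single (n - d)]
    · rw [if_pos (by omega)]
    · intro b hb hbne; rw [mem_range] at hb; rw [if_neg (by omega)]
    · intro hmem; simp only [mem_range] at hmem; omega
  · rw [if_neg hd, Finset.sum_eq_zero]; intro b hb; rw [mem_range] at hb
    rw [if_neg (by omega)]

lemma sum_ite3 (n d₁ d₂ d₃ : ℕ) (h12 : d₁ ≠ d₂) (h13 : d₁ ≠ d₃) (h23 : d₂ ≠ d₃)
    (x y z : K) (g : ℕ → K) :
    ∑ i ∈ range (n + 1),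
      (if i = d₁ then x else if i = d₂ then y else if i = d₃ then z else 0) * g i
    = (if d₁ ≤ n then x * g d₁ else 0) + (if d₂ ≤ n then y * g d₂ else 0)
      + (if d₃ ≤ n then z * g d₃ else 0) := by
  have e : ∀ i, (if i = d₁ then x else if i = d₂ then y else if i = d₃ then z else 0) * g i
      = (if i = d₁ then x * g i else 0) + (if i = d₂ then y * g i else 0)
        + (if i = d₃ then z * g i else 0) := by
    intro i; split_ifs <;> first | ring1 | (exfalso; omega)
  simp only [e, Finset.sum_add_distrib, Finset.sum_ite_eq', mem_range, Nat.lt_succ_iff]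

lemma sum_ite3' (n d₁ d₂ d₃ : ℕ) (h12 : d₁ ≠ d₂) (h13 : d₁ ≠ d₃) (h23 : d₂ ≠ d₃)
    (v x y z : ℕ → K) :
    ∑ k ∈ range (n + 1),
      v k * (if n = k + d₁ then x k else if n = k + d₂ then y k else if n = k + d₃ then z k
        else 0)
    = (if d₁ ≤ n then v (n - d₁) * x (n - d₁) else 0)
      + (if d₂ ≤ n then v (n - d₂) * y (n - d₂) else 0)
      + (if d₃ ≤ n then v (n - d₃) * z (n - d₃) else 0) := by
  have e : ∀ k, v k * (if n = k + d₁ then x k else if n = k + d₂ then y k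
        else if n = k + d₃ then z k else 0)
      = (if n = k + d₁ then v k * x k else 0) + (if n = k + d₂ then v k * y k else 0)
        + (if n = k + d₃ then v k * z k else 0) := by
    intro k; split_ifs <;> first | ring1 | (exfalso; omega)
  simp only [e, Finset.sum_add_distrib, sum_shift]

set_option maxHeartbeats 1000000 in
lemma coeff_N_pow (ℓ : ℕ) (hℓ : 1 ≤ ℓ) (μ : K) (k n : ℕ) (hn : n ≤ 2 * ℓ + 1) :
    coeff n ((X + X ^ (ℓ + 1) + C μ * X ^ (2 * ℓ + 1)) ^ k) =
      if n = k then 1 else if n = k + ℓ then (k : K)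
      else if n = k + 2 * ℓ then (k : K) * μ + (k.choose 2 : K) else 0 := by
  induction k generalizing n with
  | zero =>
    rw [pow_zero, coeff_one]
    split_ifs <;> first | ring1 | (exfalso; omega) | simp
  | succ k ih =>
    rw [pow_succ, mul_comm, coeff_mul, Finset.Nat.sum_antidiagonal_eq_sum_range_succ_mk]
    simp only [coeff_N ℓ hℓ μ]
    rw [sum_ite3 n 1 (ℓ+1) (2*ℓ+1) (by omega) (by omega) (by omega) 1 1 μ
      (fun i => coeff (n - i) ((X + X ^ (ℓ + 1) + C μ * X ^ (2 * ℓ + 1)) ^ k))]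
    rw [ih (n-1) (by omega), ih (n-(ℓ+1)) (by omega), ih (n-(2*ℓ+1)) (by omega)]
    split_ifs <;>
      first
        | (exfalso; omega)
        | ring1
        | (push_cast [Nat.choose_succ_succ, Nat.choose_one_right, Nat.choose_zero_right]; ring1)

lemma coeff_pow_low (g : K⟦X⟧) (m : ℕ) (hm : 1 ≤ m)
    (hg : ∀ j, 1 ≤ j → j < m → coeff j g = 0) (k : ℕ) :
    (∀ b, 1 ≤ b → b < m → coeff b (g ^ k) = 0) ∧
    coeff m (g ^ k) = (k : K) * (constantCoeff g) ^ (k - 1) * coeff m g := by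
  induction k with
  | zero =>
    constructor
    · intro b hb _; rw [pow_zero, coeff_one, if_neg (by omega)]
    · rw [pow_zero, coeff_one, if_neg (by omega)]; push_cast; ring
  | succ k ih =>
    have step : ∀ n : ℕ, coeff n (g ^ (k + 1))
        = ∑ x ∈ range (n + 1), coeff x g * coeff (n - x) (g ^ k) := by
      intro n
      rw [pow_succ, mul_comm, coeff_mul, Finset.Nat.sum_antidiagonal_eq_sum_range_succ_mk]
    constructor
    · intro b hb hbm
      rw [step b, Finset.sum_eq_zero]
      intro x hx; rw [mem_range] at hx
      rcases Nat.eq_zero_or_pos x with hx0 | hx1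
      · subst hx0; rw [Nat.sub_zero, ih.1 b hb hbm, mul_zero]
      · rw [hg x hx1 (by omega), zero_mul]
    · rw [step m]
      have e : ∀ x ∈ range (m + 1), coeff x g * coeff (m - x) (g ^ k)
          = (if x = 0 then coeff x g * coeff (m - x) (g ^ k) else 0)
            + (if x = m then coeff x g * coeff (m - x) (g ^ k) else 0) := by
        intro x hx; rw [mem_range] at hx
        split_ifs <;>
          first | (exfalso; omega) | ring1 | (rw [hg x (by omega) (by omega), zero_mul]; ring1)
      rw [Finset.sum_congr rfl e, Finset.sum_add_distrib]
      simp only [Finset.sum_ite_eq', mem_range, Nat.lt_succ_iff]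
      rw [if_pos (by omega), if_pos le_rfl, Nat.sub_zero, Nat.sub_self, ih.2,
        coeff_zero_eq_constantCoeff, map_pow, ← coeff_zero_eq_constantCoeff]
      cases k with
      | zero => simp
      | succ k =>
        rw [Nat.succ_sub_one, Nat.succ_sub_one]
        push_cast
        ring

end Aux

theorem stmt_3 {K : Type*} [Field K] [CharZero K] (ℓ : ℕ) (hℓ : 1 ≤ ℓ) (μ ν : K)
    (h : PowerSeries K)
    (h0 : PowerSeries.coeff 0 h = 0) (h1 : PowerSeries.coeff 1 h ≠ 0)
    (hconj : psComp h
        (PowerSeries.X + PowerSeries.X ^ (ℓ + 1)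
          + PowerSeries.C μ * PowerSeries.X ^ (2 * ℓ + 1))
      = psComp
        (PowerSeries.X + PowerSeries.X ^ (ℓ + 1)
          + PowerSeries.C ν * PowerSeries.X ^ (2 * ℓ + 1)) h) :
    μ = ν := by
  -- the coefficient equations
  have E : ∀ n : ℕ,
      ∑ k ∈ range (n+1), coeff k h
          * coeff n ((X + X ^ (ℓ+1) + C μ * X ^ (2*ℓ+1)) ^ k)
      = ∑ k ∈ range (n+1), coeff k (X + X ^ (ℓ+1) + C ν * X ^ (2*ℓ+1))
          * coeff n (h ^ k) := by
    intro n
    have := congrArg (coeff n) hconj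
    simpa [psComp, coeff_mk] using this
  -- split off a factor X from h
  obtain ⟨g, hXg⟩ : ∃ g, h = X * g :=
    PowerSeries.X_dvd_iff.mpr (by rw [← coeff_zero_eq_constantCoeff]; exact h0)
  set c : K := constantCoeff g with hc
  have hc1 : coeff 1 h = c := by
    rw [hXg, show (1:ℕ) = 0 + 1 from rfl, coeff_succ_X_mul, coeff_zero_eq_constantCoeff]
  have hcne : c ≠ 0 := hc1 ▸ h1
  have hhg : ∀ n k : ℕ, coeff n (h ^ k) = if k ≤ n then coeff (n - k) (g ^ k) else 0 := by
    intro n k; rw [hXg, mul_pow, coeff_X_pow_mul']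
  have hch : ∀ n : ℕ, coeff (n + 1) h = coeff n g := by
    intro n; rw [hXg, coeff_succ_X_mul]
  -- evaluation of the two sides of E
  have sumL : ∀ (a : K) (n : ℕ), n ≤ 2*ℓ+1 →
      ∑ k ∈ range (n+1), coeff k h
          * coeff n ((X + X ^ (ℓ+1) + C a * X ^ (2*ℓ+1)) ^ k)
      = (if 0 ≤ n then coeff (n-0) h * 1 else 0)
        + (if ℓ ≤ n then coeff (n-ℓ) h * ((n-ℓ : ℕ) : K) else 0)
        + (if 2*ℓ ≤ n then coeff (n-2*ℓ) h
            * (((n-2*ℓ : ℕ) : K) * a + ((n-2*ℓ).choose 2 : K)) else 0) := by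
    intro a n hn
    rw [Finset.sum_congr rfl (fun k _ => by rw [coeff_N_pow ℓ hℓ a k n hn])]
    have e : ∀ k : ℕ, (if n = k then (1:K) else if n = k + ℓ then (k:K)
          else if n = k + 2*ℓ then (k:K)*a + (k.choose 2 : K) else 0)
        = (if n = k + 0 then (1:K) else if n = k + ℓ then (k:K)
          else if n = k + 2*ℓ then (k:K)*a + (k.choose 2 : K) else 0) := by
      intro k; rw [Nat.add_zero]
    simp only [e]
    exact sum_ite3' n 0 ℓ (2*ℓ) (by omega) (by omega) (by omega) (fun k => coeff k h)
      (fun _ => 1) (fun k => (k:K)) (fun k => (k:K)*a + (k.choose 2:K))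
  have sumR : ∀ (a : K) (n : ℕ),
      ∑ k ∈ range (n+1), coeff k (X + X ^ (ℓ+1) + C a * X ^ (2*ℓ+1))
          * coeff n (h ^ k)
      = (if 1 ≤ n then 1 * coeff n (h ^ 1) else 0)
        + (if ℓ+1 ≤ n then 1 * coeff n (h ^ (ℓ+1)) else 0)
        + (if 2*ℓ+1 ≤ n then a * coeff n (h ^ (2*ℓ+1)) else 0) := by
    intro a n
    rw [Finset.sum_congr rfl (fun k _ => by rw [coeff_N ℓ hℓ a k])]
    exact sum_ite3 n 1 (ℓ+1) (2*ℓ+1) (by omega) (by omega) (by omega) 1 1 a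
      (fun i => coeff n (h ^ i))
  -- Step 1 : c ^ ℓ = 1
  have hcl : c ^ ℓ = 1 := by
    have e1 := E (ℓ+1)
    rw [sumL μ (ℓ+1) (by omega), sumR ν (ℓ+1)] at e1
    have t3 : (if 2*ℓ ≤ ℓ+1 then coeff (ℓ+1-2*ℓ) h
        * (((ℓ+1-2*ℓ : ℕ) : K) * μ + (((ℓ+1-2*ℓ).choose 2 : ℕ) : K)) else 0) = 0 := by
      split_ifs with hcase
      · rw [show ℓ+1-2*ℓ = 0 from by omega, h0, zero_mul]
      · rfl
    rw [t3, if_pos (show 0 ≤ ℓ+1 from by omega), if_pos (show ℓ ≤ ℓ+1 from by omega),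
      if_pos (show 1 ≤ ℓ+1 from by omega), if_pos (show ℓ+1 ≤ ℓ+1 from le_rfl),
      if_neg (show ¬ 2*ℓ+1 ≤ ℓ+1 from by omega), pow_one,
      show ℓ+1-0 = ℓ+1 from rfl, show ℓ+1-ℓ = 1 from by omega,
      hhg (ℓ+1) (ℓ+1), if_pos le_rfl, Nat.sub_self, coeff_zero_eq_constantCoeff,
      map_pow, ← hc, hc1] at e1
    push_cast at e1
    have hcc : c * c ^ ℓ = c * 1 := by
      rw [mul_one]
      linear_combination -e1
    exact mul_left_cancel₀ hcne hcc
  -- Step 2 : the coefficients of g in degrees 1,…,ℓ-1 vanish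
  have hlow : ∀ j, 1 ≤ j → j < ℓ → coeff j g = 0 := by
    intro j
    induction j using Nat.strong_induction_on with
    | _ j IH =>
    intro hj1 hjl
    have e2 := E (ℓ+1+j)
    rw [sumL μ (ℓ+1+j) (by omega), sumR ν (ℓ+1+j)] at e2
    have t3 : (if 2*ℓ ≤ ℓ+1+j then coeff (ℓ+1+j-2*ℓ) h
        * (((ℓ+1+j-2*ℓ : ℕ) : K) * μ + (((ℓ+1+j-2*ℓ).choose 2 : ℕ) : K)) else 0) = 0 := by
      split_ifs with hcase
      · rw [show ℓ+1+j-2*ℓ = 0 from by omega, h0, zero_mul]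
      · rfl
    rw [t3, if_pos (show 0 ≤ ℓ+1+j from by omega), if_pos (show ℓ ≤ ℓ+1+j from by omega),
      if_pos (show 1 ≤ ℓ+1+j from by omega), if_pos (show ℓ+1 ≤ ℓ+1+j from by omega),
      if_neg (show ¬ 2*ℓ+1 ≤ ℓ+1+j from by omega), pow_one,
      show ℓ+1+j-0 = ℓ+1+j from rfl, show ℓ+1+j-ℓ = j+1 from by omega,
      hhg (ℓ+1+j) (ℓ+1), if_pos (show ℓ+1 ≤ ℓ+1+j from by omega),
      show ℓ+1+j-(ℓ+1) = j from by omega,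
      (coeff_pow_low g j hj1 (fun i hi1 hij => IH i hij hi1 (by omega)) (ℓ+1)).2,
      show ℓ+1-1 = ℓ from by omega, ← hc, hcl, hch j] at e2
    push_cast at e2
    have key : ((j:K) + 1 - ((ℓ:K) + 1)) * coeff j g = 0 := by
      linear_combination e2
    have hne : (j:K) + 1 - ((ℓ:K) + 1) ≠ 0 := by
      rw [sub_ne_zero]
      intro hx
      exact (show j ≠ ℓ from by omega) (Nat.cast_inj.mp (add_right_cancel hx))
    exact (mul_eq_zero.mp key).resolve_left hne
  -- Step 3 : compare coefficients in degree 2ℓ+1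
  have e3 := E (2*ℓ+1)
  rw [sumL μ (2*ℓ+1) le_rfl, sumR ν (2*ℓ+1)] at e3
  rw [if_pos (show 0 ≤ 2*ℓ+1 from by omega), if_pos (show ℓ ≤ 2*ℓ+1 from by omega),
    if_pos (show 2*ℓ ≤ 2*ℓ+1 from by omega), if_pos (show 1 ≤ 2*ℓ+1 from by omega),
    if_pos (show ℓ+1 ≤ 2*ℓ+1 from by omega), if_pos (show 2*ℓ+1 ≤ 2*ℓ+1 from le_rfl),
    pow_one, show 2*ℓ+1-0 = 2*ℓ+1 from rfl, show 2*ℓ+1-ℓ = ℓ+1 from by omega,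
    show 2*ℓ+1-2*ℓ = 1 from by omega,
    hhg (2*ℓ+1) (ℓ+1), if_pos (show ℓ+1 ≤ 2*ℓ+1 from by omega),
    show 2*ℓ+1-(ℓ+1) = ℓ from by omega,
    (coeff_pow_low g ℓ hℓ hlow (ℓ+1)).2, show ℓ+1-1 = ℓ from by omega,
    hhg (2*ℓ+1) (2*ℓ+1), if_pos le_rfl, Nat.sub_self, coeff_zero_eq_constantCoeff, map_pow,
    ← hc, hcl, hch ℓ, hc1] at e3
  have hc2l : c ^ (2*ℓ+1) = c := by
    rw [show 2*ℓ+1 = ℓ+(ℓ+1) from by omega, pow_add, hcl, one_mul, pow_succ, hcl, one_mul]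
  rw [hc2l] at e3
  simp only [Nat.choose_one_right, Nat.cast_one, Nat.choose_self,
    show Nat.choose 1 2 = 0 from rfl, Nat.cast_zero] at e3
  have : c * μ = c * ν := by
    push_cast at e3
    linear_combination e3
  exact mul_left_cancel₀ hcne this
end
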